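/- arXiv:2510.14710 — 6 statements merged into one kernel-verified Lean document; each statement's English description precedes it below -/
import Mathlib

section
/- If θ has a triangle 0-conflict in [s,t], then θ is non-nested in [s,t]; that is, there exist indices r₁, r₂ ∈ [s,t] and clusters C ∈ θ(r₁), C' ∈ θ(r₂) such that C \ C', C' \ C, and C ∩ C' are all nonempty. -/
open scoped Classical

/-- A partition of a type `X` into nonempty clusters, represented as a finite
set of finite clusters such that every element lies in exactly one cluster. -/
structure Partn (X : Type*) where
  parts : Finset (Finset X)
  nonempty : ∀ C ∈ parts, C.Nonempty
  existsUnique : ∀ x : X, ∃! C, C ∈ parts ∧ x ∈ C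

namespace Partn

variable {X : Type*}

/-- `x` and `y` lie in a common cluster of `π`. -/
def rel (π : Partn X) (x y : X) : Prop := ∃ C ∈ π.parts, x ∈ C ∧ y ∈ C

/-- Refinement order: every cluster of `π` is contained in a cluster of `π'`. -/
def le (π π' : Partn X) : Prop := ∀ C ∈ π.parts, ∃ C' ∈ π'.parts, C ⊆ C'

end Partn

/-- a triangle 0-conflict implies θ is non-nested in [s,t]. -/
theorem triangle_zero_conflict_implies_non_nested
    {X ι : Type*} [DecidableEq X] [LinearOrder ι]
    (θ : ι → Partn X) (s t : ι) (x y z : X)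
    (hxy' : x ≠ y) (hxz' : x ≠ z) (hyz' : y ≠ z)
    (r₁ r₂ : ι) (hr₁ : r₁ ∈ Set.Icc s t) (hr₂ : r₂ ∈ Set.Icc s t)
    (hxy : (θ r₁).rel x y) (hyz : (θ r₂).rel y z)
    (hno : ¬ ∃ r ∈ Set.Icc s t, (θ r).rel x y ∧ (θ r).rel y z) :
    ∃ q₁ ∈ Set.Icc s t, ∃ q₂ ∈ Set.Icc s t,
      ∃ C ∈ (θ q₁).parts, ∃ C' ∈ (θ q₂).parts,
        (C \ C').Nonempty ∧ (C' \ C).Nonempty ∧ (C ∩ C').Nonempty := by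
  obtain ⟨C, hC, hxC, hyC⟩ := hxy
  obtain ⟨C', hC', hyC', hzC'⟩ := hyz
  refine ⟨r₁, hr₁, r₂, hr₂, C, hC, C', hC', ⟨x, Finset.mem_sdiff.2 ⟨hxC, ?_⟩⟩, ⟨z, Finset.mem_sdiff.2 ⟨hzC', ?_⟩⟩, ⟨y, Finset.mem_inter.2 ⟨hyC, hyC'⟩⟩⟩
  · intro hxC'
    exact hno ⟨r₂, hr₂, ⟨C', hC', hxC', hyC'⟩, ⟨C', hC', hyC', hzC'⟩⟩
  · intro hzC
    exact hno ⟨r₁, hr₁, ⟨C, hC, hxC, hyC⟩, ⟨C, hC, hyC, hzC⟩⟩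
end

section
/- The number of connected components of the union graph G^{s,t} is strictly less than min over r ∈ [s,t] of |θ(r)| if and only if the subposet {θ(r) : r ∈ [s,t]} has no maximum element with respect to the refinement order (i.e., θ has a 0-conflict in [s,t]). -/
open scoped Classical

section Aux

variable {X : Type*}

/-- pick an element of a cluster -/
noncomputable def Partn.pick (π : Partn X) (C : {C // C ∈ π.parts}) : X :=
  (π.nonempty C.1 C.2).choose

lemma Partn.pick_mem (π : Partn X) (C : {C // C ∈ π.parts}) : π.pick C ∈ C.1 :=
  (π.nonempty C.1 C.2).choose_spec

lemma Partn.eq_of_mem {π : Partn X} {C D : Finset X} {x : X} (hC : C ∈ π.parts)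
    (hD : D ∈ π.parts) (hxC : x ∈ C) (hxD : x ∈ D) : C = D := by
  obtain ⟨E, _, hu⟩ := π.existsUnique x
  exact (hu C ⟨hC, hxC⟩).trans (hu D ⟨hD, hxD⟩).symm

end Aux

/-- the number of connected components of the union graph is
strictly below the minimal number of clusters iff there is a 0-conflict. -/
theorem numComponents_lt_min_card_iff_zero_conflict
    {X ι : Type*} [Fintype X] [LinearOrder ι]
    (θ : ι → Partn X) (s t : ι) (hst : s ≤ t) :
    Nat.card (Quotient (Relation.EqvGen.setoid
        (fun x y : X => ∃ r ∈ Set.Icc s t, (θ r).rel x y))) <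
      sInf ((fun r => (θ r).parts.card) '' Set.Icc s t) ↔
    ¬ ∃ r ∈ Set.Icc s t, ∀ r' ∈ Set.Icc s t, Partn.le (θ r') (θ r) := by
  classical
  set R : X → X → Prop := fun x y : X => ∃ r ∈ Set.Icc s t, (θ r).rel x y with hRdef
  set sd := Relation.EqvGen.setoid R with hsd
  -- the canonical surjection from clusters of θ r to components
  have hcard : ∀ C : {C // C ∈ (θ s).parts}, True := fun _ => trivial
  set h : ∀ r : ι, {C // C ∈ (θ r).parts} → Quotient sd :=
    fun r C => Quotient.mk sd ((θ r).pick C) with hh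
  have hmk : ∀ (x y : X), Relation.EqvGen R x y →
      (Quotient.mk sd x = Quotient.mk sd y) := fun x y hxy => Quotient.sound hxy
  have hsurj : ∀ r ∈ Set.Icc s t, Function.Surjective (h r) := by
    intro r hr q
    obtain ⟨x, rfl⟩ := Quotient.exists_rep q
    obtain ⟨C, ⟨hC, hxC⟩, _⟩ := (θ r).existsUnique x
    refine ⟨⟨C, hC⟩, hmk _ _ ?_⟩
    exact Relation.EqvGen.rel _ _ ⟨r, hr, C, hC, (θ r).pick_mem ⟨C, hC⟩, hxC⟩
  have hcards : ∀ r : ι, Nat.card {C // C ∈ (θ r).parts} = (θ r).parts.card := by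
    intro r
    simp [Nat.card_eq_fintype_card]
  constructor
  · -- < implies no maximum
    rintro hlt ⟨r, hr, hmax⟩
    -- rel (θ r) is an equivalence containing R, hence EqvGen R ≤ rel (θ r)
    have key : ∀ x y : X, Relation.EqvGen R x y → (θ r).rel x y := by
      intro x y hxy
      induction hxy with
      | rel a b hab =>
        obtain ⟨r', hr', C', hC', haC', hbC'⟩ := hab
        obtain ⟨C, hC, hsub⟩ := hmax r' hr' C' hC'
        exact ⟨C, hC, hsub haC', hsub hbC'⟩
      | refl a =>
        obtain ⟨C, ⟨hC, haC⟩, _⟩ := (θ r).existsUnique a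
        exact ⟨C, hC, haC, haC⟩
      | symm a b _ ih => obtain ⟨C, hC, h1, h2⟩ := ih; exact ⟨C, hC, h2, h1⟩
      | trans a b c _ _ ih1 ih2 =>
        obtain ⟨C, hC, h1, h2⟩ := ih1
        obtain ⟨D, hD, h3, h4⟩ := ih2
        exact ⟨C, hC, h1, (Partn.eq_of_mem hC hD h2 h3) ▸ h4⟩
    have hinj : Function.Injective (h r) := by
      intro C D hCD
      have hrel : (θ r).rel ((θ r).pick C) ((θ r).pick D) :=
        key _ _ (Quotient.exact hCD)
      obtain ⟨E, hE, h1, h2⟩ := hrel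
      have e1 : C.1 = E := Partn.eq_of_mem C.2 hE ((θ r).pick_mem C) h1
      have e2 : D.1 = E := Partn.eq_of_mem D.2 hE ((θ r).pick_mem D) h2
      exact Subtype.ext (e1.trans e2.symm)
    have heq : Nat.card (Quotient sd) = (θ r).parts.card := by
      rw [← hcards r]
      exact (Nat.card_eq_of_bijective (h r) ⟨hinj, hsurj r hr⟩).symm
    have hmem : (θ r).parts.card ∈ ((fun r => (θ r).parts.card) '' Set.Icc s t) :=
      ⟨r, hr, rfl⟩
    have := Nat.sInf_le hmem
    omega
  · -- no maximum implies <
    intro hno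
    have hne : ((fun r => (θ r).parts.card) '' Set.Icc s t).Nonempty :=
      ⟨(θ s).parts.card, s, ⟨le_refl s, hst⟩, rfl⟩
    obtain ⟨r, hr, hrim⟩ := Nat.sInf_mem hne
    push_neg at hno
    obtain ⟨r', hr', hnle⟩ := hno r hr
    rw [Partn.le] at hnle
    push_neg at hnle
    obtain ⟨C', hC', hsub⟩ := hnle
    obtain ⟨x, hxC'⟩ := (θ r').nonempty C' hC'
    obtain ⟨C, ⟨hC, hxC⟩, _⟩ := (θ r).existsUnique x
    obtain ⟨y, hyC', hyC⟩ : ∃ y ∈ C', y ∉ C := by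
      by_contra hcon
      push_neg at hcon
      exact hsub C hC hcon
    obtain ⟨D, ⟨hD, hyD⟩, _⟩ := (θ r).existsUnique y
    have hCD : C ≠ D := fun e => hyC (e ▸ hyD)
    have hhne : ¬ Function.Injective (h r) := by
      intro hinj
      apply hCD
      have e1 : h r ⟨C, hC⟩ = Quotient.mk sd x :=
        hmk _ _ (Relation.EqvGen.rel _ _ ⟨r, hr, C, hC, (θ r).pick_mem ⟨C, hC⟩, hxC⟩)
      have e2 : h r ⟨D, hD⟩ = Quotient.mk sd y :=
        hmk _ _ (Relation.EqvGen.rel _ _ ⟨r, hr, D, hD, (θ r).pick_mem ⟨D, hD⟩, hyD⟩)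
      have e3 : Quotient.mk sd x = Quotient.mk sd y :=
        hmk _ _ (Relation.EqvGen.rel _ _ ⟨r', hr', C', hC', hxC', hyC'⟩)
      have : (⟨C, hC⟩ : {C // C ∈ (θ r).parts}) = ⟨D, hD⟩ :=
        hinj (by rw [e1, e2, e3])
      exact congrArg Subtype.val this
    have hle : Nat.card (Quotient sd) ≤ (θ r).parts.card := by
      rw [← hcards r]
      exact Nat.card_le_card_of_surjective (h r) (hsurj r hr)
    rcases lt_or_eq_of_le hle with hlt | heq
    · have hr2 : (θ r).parts.card = sInf ((fun r => (θ r).parts.card) '' Set.Icc s t) := hrim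
      omega
    · exfalso
      apply hhne
      have hbij := ((hsurj r hr).bijective_of_nat_card_le (le_of_eq ((hcards r).trans heq.symm)))
      exact hbij.1
end

section
/- For r ∈ [s,t], the number of connected components of the union graph G^{s,t} equals |θ(r)| if and only if θ(r) is the maximum of the subposet {θ(r') : r' ∈ [s,t]} under the refinement order. -/
open scoped Classical

lemma Partn.eq_of_mem_mem {X : Type*} (π : Partn X) {C C' : Finset X} {x : X}
    (hC : C ∈ π.parts) (hC' : C' ∈ π.parts) (hx : x ∈ C) (hx' : x ∈ C') : C = C' := by
  obtain ⟨D, _, hu⟩ := π.existsUnique x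
  rw [hu C ⟨hC, hx⟩, hu C' ⟨hC', hx'⟩]

lemma Partn.rel_refl {X : Type*} (π : Partn X) (x : X) : π.rel x x := by
  obtain ⟨C, ⟨hC, hx⟩, _⟩ := π.existsUnique x
  exact ⟨C, hC, hx, hx⟩

lemma Partn.rel_symm {X : Type*} (π : Partn X) {x y : X} (h : π.rel x y) : π.rel y x := by
  obtain ⟨C, hC, hx, hy⟩ := h; exact ⟨C, hC, hy, hx⟩

lemma Partn.rel_trans {X : Type*} (π : Partn X) {x y z : X} (h : π.rel x y)
    (h' : π.rel y z) : π.rel x z := by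
  obtain ⟨C, hC, hx, hy⟩ := h
  obtain ⟨C', hC', hy', hz⟩ := h'
  exact ⟨C, hC, hx, (π.eq_of_mem_mem hC' hC hy' hy) ▸ hz⟩

/-- the number of connected components of the union graph equals
|θ(r)| iff θ(r) is the maximum of the subposet under refinement. -/
theorem numComponents_eq_card_iff_maximum
    {X ι : Type*} [Fintype X] [LinearOrder ι]
    (θ : ι → Partn X) (s t : ι) (r : ι) (hr : r ∈ Set.Icc s t) :
    Nat.card (Quotient (Relation.EqvGen.setoid
        (fun x y : X => ∃ q ∈ Set.Icc s t, (θ q).rel x y))) =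
      (θ r).parts.card ↔
    ∀ r' ∈ Set.Icc s t, Partn.le (θ r') (θ r) := by
  set R := fun x y : X => ∃ q ∈ Set.Icc s t, (θ q).rel x y with hR
  set S := Relation.EqvGen.setoid R with hS
  -- the quotient map identifies points related by any θ q, q ∈ [s,t]
  have hmk : ∀ q ∈ Set.Icc s t, ∀ x y : X, (θ q).rel x y →
      (Quotient.mk S x) = Quotient.mk S y := by
    intro q hq x y hxy
    exact Quotient.sound (Relation.EqvGen.rel x y ⟨q, hq, hxy⟩)
  -- map from parts of θ r to the quotient
  set g : {C // C ∈ (θ r).parts} → Quotient S :=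
    fun C => Quotient.mk S ((θ r).nonempty C.1 C.2).choose with hg
  have hgmem : ∀ C : {C // C ∈ (θ r).parts}, ((θ r).nonempty C.1 C.2).choose ∈ C.1 :=
    fun C => ((θ r).nonempty C.1 C.2).choose_spec
  have hgmk : ∀ (C : {C // C ∈ (θ r).parts}) (x : X), x ∈ C.1 →
      g C = Quotient.mk S x := by
    intro C x hx
    exact hmk r hr _ x ⟨C.1, C.2, hgmem C, hx⟩
  have hsurj : Function.Surjective g := by
    intro z
    induction z using Quotient.ind with
    | _ x =>
      obtain ⟨C, ⟨hC, hx⟩, _⟩ := (θ r).existsUnique x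
      exact ⟨⟨C, hC⟩, hgmk ⟨C, hC⟩ x hx⟩
  have hcardparts : Nat.card {C // C ∈ (θ r).parts} = (θ r).parts.card := by
    simp [Nat.card_eq_fintype_card]
  constructor
  · intro hcard r' hr' C hC
    have hbij : Function.Bijective g :=
      (Nat.bijective_iff_surjective_and_card g).2 ⟨hsurj, by rw [hcardparts, hcard]⟩
    obtain ⟨x, hx⟩ := (θ r').nonempty C hC
    obtain ⟨Cx, ⟨hCx, hxCx⟩, _⟩ := (θ r).existsUnique x
    refine ⟨Cx, hCx, fun y hy => ?_⟩
    obtain ⟨Cy, ⟨hCy, hyCy⟩, _⟩ := (θ r).existsUnique y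
    have h1 : g ⟨Cx, hCx⟩ = g ⟨Cy, hCy⟩ := by
      rw [hgmk ⟨Cx, hCx⟩ x hxCx, hgmk ⟨Cy, hCy⟩ y hyCy]
      exact hmk r' hr' x y ⟨C, hC, hx, hy⟩
    have := hbij.1 h1
    have hxy : Cx = Cy := congrArg Subtype.val this
    rw [hxy]; exact hyCy
  · intro h
    have hinj : Function.Injective g := by
      intro C C' hCC'
      have hEq : Relation.EqvGen R (((θ r).nonempty C.1 C.2).choose)
          (((θ r).nonempty C'.1 C'.2).choose) := Quotient.exact hCC'
      -- EqvGen R is contained in rel (θ r) under the maximality assumption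
      have key : ∀ a b : X, Relation.EqvGen R a b → (θ r).rel a b := by
        intro a b hab
        induction hab with
        | rel x y hxy =>
          obtain ⟨q, hq, Cq, hCq, hx, hy⟩ := hxy
          obtain ⟨D, hD, hsub⟩ := h q hq Cq hCq
          exact ⟨D, hD, hsub hx, hsub hy⟩
        | refl x => exact (θ r).rel_refl x
        | symm _ _ _ ih => exact (θ r).rel_symm ih
        | trans _ _ _ _ _ ih1 ih2 => exact (θ r).rel_trans ih1 ih2
      obtain ⟨D, hD, h1, h2⟩ := key _ _ hEq
      have e1 : C.1 = D := (θ r).eq_of_mem_mem C.2 hD (hgmem C) h1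
      have e2 : C'.1 = D := (θ r).eq_of_mem_mem C'.2 hD (hgmem C') h2
      exact Subtype.ext (e1.trans e2.symm)
    rw [← hcardparts]
    exact (Nat.card_eq_of_bijective g ⟨hinj, hsurj⟩).symm
end

section
/- Let θ be a hierarchical sequence of partitions in [s,t]. Then the simplicial complex K^{s,t} built as the union of the solid simplices of all clusters of θ(r) for r ∈ [s,t] has trivial first homology: H₁(K^{s,t}) = 0. -/
open scoped Classical

/-- if θ is hierarchical in [s,t], then the complex K^{s,t}
(union of the solid simplices of all clusters in the window) has trivial
first homology with rational coefficients: every 1-cycle (encoded as an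
antisymmetric function supported on edges of K with vanishing boundary) is the
boundary of a 2-chain (an alternating function supported on triangles of K). -/
theorem hierarchical_H1_trivial
    {X ι : Type*} [Fintype X] [LinearOrder ι]
    (θ : ι → Partn X) (s t : ι)
    (hhier : (∀ r₁ ∈ Set.Icc s t, ∀ r₂ ∈ Set.Icc s t, r₁ ≤ r₂ →
          Partn.le (θ r₁) (θ r₂)) ∨
        (∀ r₁ ∈ Set.Icc s t, ∀ r₂ ∈ Set.Icc s t, r₁ ≤ r₂ →
          Partn.le (θ r₂) (θ r₁))) :
    ∀ f : X → X → ℚ,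
      (∀ x y, f x y = - f y x) →
      (∀ x y, f x y ≠ 0 → ∃ r ∈ Set.Icc s t, ∃ C ∈ (θ r).parts,
        x ∈ C ∧ y ∈ C) →
      (∀ x, ∑ y, f x y = 0) →
      ∃ g : X → X → X → ℚ,
        (∀ x y z, g x y z = - g y x z) ∧
        (∀ x y z, g x y z = - g x z y) ∧
        (∀ x y z, g x y z ≠ 0 → ∃ r ∈ Set.Icc s t, ∃ C ∈ (θ r).parts,
          x ∈ C ∧ y ∈ C ∧ z ∈ C) ∧
        (∀ x y, f x y = ∑ z, g x y z) := by
  classical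
  intro f hf hsupp hcyc
  by_cases hst : s ≤ t
  · -- choose the coarsest partition in the window
    obtain ⟨r₀, hr₀, hle⟩ : ∃ r₀ ∈ Set.Icc s t, ∀ r ∈ Set.Icc s t,
        Partn.le (θ r) (θ r₀) := by
      rcases hhier with h | h
      · exact ⟨t, ⟨hst, le_refl t⟩, fun r hr => h r hr t ⟨hst, le_refl t⟩ hr.2⟩
      · exact ⟨s, ⟨le_refl s, hst⟩, fun r hr => h s ⟨le_refl s, hst⟩ r hr hr.1⟩
    choose D hD using fun x => ((θ r₀).existsUnique x).exists
    have huniq : ∀ x (C : Finset X), C ∈ (θ r₀).parts → x ∈ C → C = D x := by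
      intro x C hC hx
      obtain ⟨C', hC', hu⟩ := (θ r₀).existsUnique x
      rw [hu C ⟨hC, hx⟩, hu (D x) (hD x)]
    have hUsame : ∀ x y, f x y ≠ 0 → D x = D y := by
      intro x y hne
      obtain ⟨r, hr, C, hC, hx, hy⟩ := hsupp x y hne
      obtain ⟨C', hC', hsub⟩ := hle r hr C hC
      rw [← huniq x C' hC' (hsub hx), huniq y C' hC' (hsub hy)]
    set T : X → X → X → ℚ :=
      fun a c d => if a ∈ D c then f c d / (D c).card else 0 with hT
    have hTanti : ∀ a c d, T a c d = - T a d c := by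
      intro a c d
      by_cases h : f c d = 0
      · have h' : f d c = 0 := by rw [hf d c, h, neg_zero]
        simp [hT, h, h']
      · have hDcd := hUsame c d h
        simp only [hT, hDcd, hf c d]
        split_ifs <;> ring
    have hTsupp : ∀ a c d, T a c d ≠ 0 → a ∈ D c ∧ c ∈ D c ∧ d ∈ D c := by
      intro a c d h
      have ha : a ∈ D c := by
        by_contra hac; simp [hT, hac] at h
      have hfcd : f c d ≠ 0 := by
        intro h0; simp [hT, h0] at h
      refine ⟨ha, (hD c).2, ?_⟩
      rw [hUsame c d hfcd]; exact (hD d).2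
    refine ⟨fun x y z => T x y z + T y z x + T z x y, ?_, ?_, ?_, ?_⟩
    · intro x y z
      show T x y z + T y z x + T z x y = -(T y x z + T x z y + T z y x)
      rw [hTanti y x z, hTanti x z y, hTanti z y x]; ring
    · intro x y z
      show T x y z + T y z x + T z x y = -(T x z y + T z y x + T y x z)
      rw [hTanti x z y, hTanti z y x, hTanti y x z]; ring
    · intro x y z hg
      by_cases h1 : T x y z ≠ 0
      · obtain ⟨ha, hb, hc⟩ := hTsupp x y z h1
        exact ⟨r₀, hr₀, D y, (hD y).1, ha, hb, hc⟩
      by_cases h2 : T y z x ≠ 0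
      · obtain ⟨ha, hb, hc⟩ := hTsupp y z x h2
        exact ⟨r₀, hr₀, D z, (hD z).1, hc, ha, hb⟩
      by_cases h3 : T z x y ≠ 0
      · obtain ⟨ha, hb, hc⟩ := hTsupp z x y h3
        exact ⟨r₀, hr₀, D x, (hD x).1, hb, hc, ha⟩
      push_neg at h1 h2 h3
      exact absurd (show T x y z + T y z x + T z x y = 0 by
        rw [h1, h2, h3]; ring) hg
    · intro x y
      have hsum2 : ∑ z, f z x = 0 := by
        have : ∀ z, f z x = - f x z := fun z => hf z x
        simp_rw [this, Finset.sum_neg_distrib, hcyc x, neg_zero]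
      have e1 : ∑ z, T x y z = 0 := by
        by_cases hx : x ∈ D y
        · simp [hT, hx, ← Finset.sum_div, hcyc y]
        · simp [hT, hx]
      have e2 : ∑ z, T y z x = 0 := by
        have hterm : ∀ z, T y z x =
            if y ∈ D x then f z x / (D x).card else 0 := by
          intro z
          by_cases hz : f z x = 0
          · simp [hT, hz]
          · simp only [hT, hUsame z x hz]
        rw [Finset.sum_congr rfl fun z _ => hterm z]
        by_cases hy : y ∈ D x
        · simp [hy, ← Finset.sum_div, hsum2]
        · simp [hy]
      have e3 : ∑ z, T z x y = f x y := by
        have hcard : ((D x).card : ℚ) ≠ 0 := by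
          have h0 : (D x).card ≠ 0 := Finset.card_ne_zero.mpr ⟨x, (hD x).2⟩
          exact_mod_cast h0
        simp only [hT]
        rw [Finset.sum_ite_mem, Finset.univ_inter, Finset.sum_const, nsmul_eq_mul]
        field_simp
      rw [Finset.sum_add_distrib, Finset.sum_add_distrib, e1, e2, e3, zero_add, zero_add]
  · -- empty window: f is identically zero
    refine ⟨fun _ _ _ => 0, by simp, by simp, by simp, ?_⟩
    intro x y
    rw [Finset.sum_const_zero]
    by_contra hne
    obtain ⟨r, hr, _⟩ := hsupp x y hne
    exact hst (hr.1.trans hr.2)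
end

section
/- For two partitions θ(t_m), θ(t_{m+1}) of a finite set X, there is a triangle 0-conflict in {t_m, t_{m+1}} if and only if the bipartite cluster-overlap graph (clusters as vertices, edges for nonempty intersections) contains a path with at least 3 edges. -/
open scoped Classical

/-- Bipartite overlap relation between clusters of two partitions: a cluster of
π (on the left) is related to a cluster of π' (on the right) iff they
intersect. -/
def overlapRel {X : Type*} (π π' : Partn X) :
    (Finset X ⊕ Finset X) → (Finset X ⊕ Finset X) → Prop
  | Sum.inl C, Sum.inr C' =>
      C ∈ π.parts ∧ C' ∈ π'.parts ∧ (C ∩ C').Nonempty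
  | _, _ => False

/-- The bipartite cluster-overlap graph of two partitions. -/
def overlapGraph {X : Type*} (π π' : Partn X) :
    SimpleGraph (Finset X ⊕ Finset X) :=
  SimpleGraph.fromRel (overlapRel π π')
lemma Partn.part_eq {X : Type*} (π : Partn X) {C D : Finset X} {x : X}
    (hC : C ∈ π.parts) (hD : D ∈ π.parts) (hx : x ∈ C) (hx' : x ∈ D) : C = D :=
  (π.existsUnique x).unique ⟨hC, hx⟩ ⟨hD, hx'⟩

lemma overlap_adj_of {X : Type*} (π π' : Partn X) {C C' : Finset X}
    (hC : C ∈ π.parts) (hC' : C' ∈ π'.parts) (h : ∃ a, a ∈ C ∧ a ∈ C') :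
    (overlapGraph π π').Adj (Sum.inl C) (Sum.inr C') := by
  obtain ⟨a, ha1, ha2⟩ := h
  exact ⟨by simp, Or.inl ⟨hC, hC', a, Finset.mem_inter.2 ⟨ha1, ha2⟩⟩⟩

lemma overlap_adj_cases {X : Type*} (π π' : Partn X) {s t : Finset X ⊕ Finset X}
    (h : (overlapGraph π π').Adj s t) :
    (∃ C C', s = Sum.inl C ∧ t = Sum.inr C' ∧ C ∈ π.parts ∧ C' ∈ π'.parts ∧
      ∃ a, a ∈ C ∧ a ∈ C') ∨
    (∃ C C', s = Sum.inr C' ∧ t = Sum.inl C ∧ C ∈ π.parts ∧ C' ∈ π'.parts ∧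
      ∃ a, a ∈ C ∧ a ∈ C') := by
  obtain ⟨-, h | h⟩ := h
  · rcases s with C | C <;> rcases t with C' | C' <;> simp [overlapRel] at h
    obtain ⟨h1, h2, a, ha⟩ := h
    exact Or.inl ⟨C, C', rfl, rfl, h1, h2, a, Finset.mem_inter.1 ha⟩
  · rcases s with C | C <;> rcases t with C' | C' <;> simp [overlapRel] at h
    obtain ⟨h1, h2, a, ha⟩ := h
    exact Or.inr ⟨C', C, rfl, rfl, h1, h2, a, Finset.mem_inter.1 ha⟩

/-- Core construction: a chain A — C' — D — B' of distinct clusters with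
nonempty consecutive intersections yields a triangle 0-conflict. -/
lemma conflict_core {X : Type*} (π π' : Partn X)
    {A D C' B' : Finset X}
    (hA : A ∈ π.parts) (hD : D ∈ π.parts) (hC' : C' ∈ π'.parts) (hB' : B' ∈ π'.parts)
    (hAD : A ≠ D) (hCB : C' ≠ B')
    (h1 : ∃ a, a ∈ A ∧ a ∈ C') (h2 : ∃ a, a ∈ C' ∧ a ∈ D)
    (h3 : ∃ a, a ∈ D ∧ a ∈ B') :
    (∃ x y z : X, x ≠ y ∧ x ≠ z ∧ y ≠ z ∧
      (∃ ρ₁ ∈ ({π, π'} : Set (Partn X)), ρ₁.rel x y) ∧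
      (∃ ρ₂ ∈ ({π, π'} : Set (Partn X)), ρ₂.rel y z) ∧
      ¬ ∃ ρ ∈ ({π, π'} : Set (Partn X)), ρ.rel x y ∧ ρ.rel y z) := by
  obtain ⟨a, ha⟩ := h1
  obtain ⟨y, hy⟩ := h2
  obtain ⟨z, hz⟩ := h3
  refine ⟨a, y, z, ?_, ?_, ?_, ?_, ?_, ?_⟩
  · rintro rfl; exact hAD (π.part_eq hA hD ha.1 hy.2)
  · rintro rfl; exact hCB (π'.part_eq hC' hB' ha.2 hz.2)
  · rintro rfl; exact hCB (π'.part_eq hC' hB' hy.1 hz.2)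
  · exact ⟨π', by simp, C', hC', ha.2, hy.1⟩
  · exact ⟨π, by simp, D, hD, hy.2, hz.1⟩
  · rintro ⟨ρ, hρ, hxy, hyz⟩
    simp only [Set.mem_insert_iff, Set.mem_singleton_iff] at hρ
    rcases hρ with h | h
    · obtain ⟨E, hE, haE, hyE⟩ := hxy
      rw [h] at hE
      exact hAD ((π.part_eq hA hE ha.1 haE).trans (π.part_eq hE hD hyE hy.2))
    · obtain ⟨E, hE, hyE, hzE⟩ := hyz
      rw [h] at hE
      exact hCB ((π'.part_eq hC' hE hy.1 hyE).trans (π'.part_eq hE hB' hzE hz.2))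

/-- Core construction: a chain A — C' — D — B' of distinct clusters with
nonempty consecutive intersections yields a path of length 3. -/
lemma walk_core {X : Type*} (π π' : Partn X)
    {A D C' B' : Finset X}
    (hA : A ∈ π.parts) (hD : D ∈ π.parts) (hC' : C' ∈ π'.parts) (hB' : B' ∈ π'.parts)
    (hAD : A ≠ D) (hCB : C' ≠ B')
    (h1 : ∃ a, a ∈ A ∧ a ∈ C') (h2 : ∃ a, a ∈ D ∧ a ∈ C')
    (h3 : ∃ a, a ∈ D ∧ a ∈ B') :
    (∃ (u v : Finset X ⊕ Finset X) (p : (overlapGraph π π').Walk u v),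
      p.IsPath ∧ 3 ≤ p.length) := by
  refine ⟨Sum.inl A, Sum.inr B',
    SimpleGraph.Walk.cons (overlap_adj_of π π' hA hC' h1)
      (SimpleGraph.Walk.cons (overlap_adj_of π π' hD hC' h2).symm
        (SimpleGraph.Walk.cons (overlap_adj_of π π' hD hB' h3) SimpleGraph.Walk.nil)),
    ?_, by simp⟩
  simp [SimpleGraph.Walk.isPath_def, hAD, hCB]

lemma overlap_adj_inl {X : Type*} {π π' : Partn X} {C : Finset X}
    {t : Finset X ⊕ Finset X} (h : (overlapGraph π π').Adj (Sum.inl C) t) :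
    ∃ C', t = Sum.inr C' ∧ C ∈ π.parts ∧ C' ∈ π'.parts ∧ ∃ a, a ∈ C ∧ a ∈ C' := by
  rcases overlap_adj_cases π π' h with
    ⟨C0, C1, hs, rfl, h1, h2, h3⟩ | ⟨C0, C1, hs, -⟩
  · obtain rfl : C = C0 := Sum.inl.inj hs
    exact ⟨C1, rfl, h1, h2, h3⟩
  · exact absurd hs (by simp)

lemma overlap_adj_inr {X : Type*} {π π' : Partn X} {C' : Finset X}
    {t : Finset X ⊕ Finset X} (h : (overlapGraph π π').Adj (Sum.inr C') t) :
    ∃ C, t = Sum.inl C ∧ C ∈ π.parts ∧ C' ∈ π'.parts ∧ ∃ a, a ∈ C ∧ a ∈ C' := by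
  rcases overlap_adj_cases π π' h with
    ⟨C0, C1, hs, -⟩ | ⟨C0, C1, hs, rfl, h1, h2, h3⟩
  · exact absurd hs (by simp)
  · obtain rfl : C' = C1 := Sum.inr.inj hs
    exact ⟨C0, rfl, h1, h2, h3⟩

/-- two partitions have a triangle 0-conflict iff the bipartite
cluster-overlap graph contains a path with at least 3 edges. -/
theorem triangle_zero_conflict_iff_path_length_three
    {X : Type*} [DecidableEq X] (π π' : Partn X) :
    (∃ x y z : X, x ≠ y ∧ x ≠ z ∧ y ≠ z ∧
      (∃ ρ₁ ∈ ({π, π'} : Set (Partn X)), ρ₁.rel x y) ∧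
      (∃ ρ₂ ∈ ({π, π'} : Set (Partn X)), ρ₂.rel y z) ∧
      ¬ ∃ ρ ∈ ({π, π'} : Set (Partn X)), ρ.rel x y ∧ ρ.rel y z) ↔
    (∃ (u v : Finset X ⊕ Finset X) (p : (overlapGraph π π').Walk u v),
      p.IsPath ∧ 3 ≤ p.length) := by
  constructor
  · rintro ⟨x, y, z, hxy, hxz, hyz, ⟨ρ₁, hρ₁, hr1⟩, ⟨ρ₂, hρ₂, hr2⟩, hno⟩
    simp only [Set.mem_insert_iff, Set.mem_singleton_iff] at hρ₁ hρ₂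
    rcases hρ₁ with h₁ | h₁ <;> rw [h₁] at hr1 <;>
      rcases hρ₂ with h₂ | h₂ <;> rw [h₂] at hr2
    · exact absurd ⟨π, by simp, hr1, hr2⟩ hno
    · -- x ~ y in π, y ~ z in π'
      obtain ⟨C, hC, hxC, hyC⟩ := hr1
      obtain ⟨D', hD', hyD', hzD'⟩ := hr2
      obtain ⟨A', ⟨hA', hxA'⟩, -⟩ := π'.existsUnique x
      obtain ⟨B, ⟨hB, hzB⟩, -⟩ := π.existsUnique z
      have hBC : B ≠ C := by
        rintro rfl
        exact hno ⟨π, by simp, ⟨B, hB, hxC, hyC⟩, ⟨B, hB, hyC, hzB⟩⟩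
      have hDA : D' ≠ A' := by
        rintro rfl
        exact hno ⟨π', by simp, ⟨D', hD', hxA', hyD'⟩, ⟨D', hD', hyD', hzD'⟩⟩
      exact walk_core π π' hB hC hD' hA' hBC hDA
        ⟨z, hzB, hzD'⟩ ⟨y, hyC, hyD'⟩ ⟨x, hxC, hxA'⟩
    · -- x ~ y in π', y ~ z in π
      obtain ⟨C', hC', hxC', hyC'⟩ := hr1
      obtain ⟨D, hD, hyD, hzD⟩ := hr2
      obtain ⟨A, ⟨hA, hxA⟩, -⟩ := π.existsUnique x
      obtain ⟨B', ⟨hB', hzB'⟩, -⟩ := π'.existsUnique z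
      have hAD : A ≠ D := by
        rintro rfl
        exact hno ⟨π, by simp, ⟨A, hA, hxA, hyD⟩, ⟨A, hA, hyD, hzD⟩⟩
      have hCB : C' ≠ B' := by
        rintro rfl
        exact hno ⟨π', by simp, ⟨C', hC', hxC', hyC'⟩, ⟨C', hC', hyC', hzB'⟩⟩
      exact walk_core π π' hA hD hC' hB' hAD hCB
        ⟨x, hxA, hxC'⟩ ⟨y, hyD, hyC'⟩ ⟨z, hzD, hzB'⟩
    · exact absurd ⟨π', by simp, hr1, hr2⟩ hno
  · rintro ⟨u, v, p, hp, hl⟩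
    cases p with
    | nil => simp at hl
    | cons h1 q =>
      rename_i b₁
      cases q with
      | nil => simp at hl
      | cons h2 q2 =>
        rename_i b₂
        cases q2 with
        | nil => simp [SimpleGraph.Walk.length_cons] at hl
        | cons h3 r =>
          rename_i b₃
          have hnd := hp.support_nodup
          simp only [SimpleGraph.Walk.support_cons, List.nodup_cons,
            List.mem_cons] at hnd
          have hub : u ≠ b₂ := fun h => hnd.1 (Or.inr (Or.inl h))
          have hbb : b₁ ≠ b₃ := fun h => hnd.2.1 (Or.inr (h ▸ r.start_mem_support))
          rcases u with C0 | C1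
          · obtain ⟨C1, rfl, hC0, hC1, hi1⟩ := overlap_adj_inl h1
            obtain ⟨C2, rfl, hC2, -, hi2⟩ := overlap_adj_inr h2
            obtain ⟨C3, rfl, -, hC3, hi3⟩ := overlap_adj_inl h3
            have hne1 : C0 ≠ C2 := fun h => hub (by rw [h])
            have hne2 : C1 ≠ C3 := fun h => hbb (by rw [h])
            obtain ⟨a2, ha2⟩ := hi2
            exact conflict_core π π' hC0 hC2 hC1 hC3 hne1 hne2
              hi1 ⟨a2, ha2.2, ha2.1⟩ hi3
          · obtain ⟨C0, rfl, hC0, hC1, hi1⟩ := overlap_adj_inr h1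
            obtain ⟨C2, rfl, -, hC2, hi2⟩ := overlap_adj_inl h2
            obtain ⟨C3, rfl, hC3, -, hi3⟩ := overlap_adj_inr h3
            have hne1 : C1 ≠ C2 := fun h => hub (by rw [h])
            have hne2 : C0 ≠ C3 := fun h => hbb (by rw [h])
            obtain ⟨a1, ha1⟩ := hi1
            obtain ⟨a3, ha3⟩ := hi3
            rw [Set.pair_comm π π']
            exact conflict_core π' π hC1 hC2 hC0 hC3 hne1 hne2
              ⟨a1, ha1.2, ha1.1⟩ hi2 ⟨a3, ha3.2, ha3.1⟩
end

section
/- Every cycle in the bipartite cluster-overlap graph of two partitions of a finite set has even length, and such a cycle exists if and only if the simplicial complex K^{t_m,t_{m+1}} of the two-scale Multiscale Clustering Bifiltration has nontrivial first homology (a 1-conflict). -/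
open scoped Classical

/-- The first homology (with rational coefficients) of the two-scale MCbiF
complex K = (⋃_{C ∈ π} ΔC) ∪ (⋃_{C' ∈ π'} ΔC') is trivial: every 1-cycle
(an antisymmetric function supported on edges of K with vanishing boundary)
is the boundary of a 2-chain supported on triangles of K. -/
def H1Trivial {X : Type*} [Fintype X] (π π' : Partn X) : Prop :=
  ∀ f : X → X → ℚ,
    (∀ x y, f x y = - f y x) →
    (∀ x y, f x y ≠ 0 → ∃ C, (C ∈ π.parts ∨ C ∈ π'.parts) ∧
      x ∈ C ∧ y ∈ C) →
    (∀ x, ∑ y, f x y = 0) →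
    ∃ g : X → X → X → ℚ,
      (∀ x y z, g x y z = - g y x z) ∧
      (∀ x y z, g x y z = - g x z y) ∧
      (∀ x y z, g x y z ≠ 0 → ∃ C, (C ∈ π.parts ∨ C ∈ π'.parts) ∧
        x ∈ C ∧ y ∈ C ∧ z ∈ C) ∧
      (∀ x y, f x y = ∑ z, g x y z)


namespace Partn
variable {X : Type*}

noncomputable def cl (π : Partn X) (x : X) : Finset X := (π.existsUnique x).choose

lemma cl_mem (π : Partn X) (x : X) : π.cl x ∈ π.parts := (π.existsUnique x).choose_spec.1.1
lemma mem_cl (π : Partn X) (x : X) : x ∈ π.cl x := (π.existsUnique x).choose_spec.1.2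
lemma cl_eq (π : Partn X) {x : X} {C : Finset X} (hC : C ∈ π.parts) (hx : x ∈ C) :
    C = π.cl x := (π.existsUnique x).choose_spec.2 C ⟨hC, hx⟩

lemma eq_of_mem_s15 (π : Partn X) {C D : Finset X} {x : X} (hC : C ∈ π.parts) (hD : D ∈ π.parts)
    (hxC : x ∈ C) (hxD : x ∈ D) : C = D := by
  rw [π.cl_eq hC hxC, π.cl_eq hD hxD]

end Partn

section parity
variable {X : Type*} {π π' : Partn X}

lemma adj_isLeft {a b : Finset X ⊕ Finset X} (h : (overlapGraph π π').Adj a b) :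
    a.isLeft = !b.isLeft := by
  rw [overlapGraph, SimpleGraph.fromRel_adj] at h
  rcases h with ⟨-, h | h⟩ <;> rcases a with A | A <;> rcases b with B | B <;>
    simp [overlapRel] at h ⊢

lemma walk_parity {a b : Finset X ⊕ Finset X} (p : (overlapGraph π π').Walk a b) :
    (a.isLeft = b.isLeft ↔ Even p.length) := by
  induction p with
  | nil => simp
  | @cons a c b h q ih =>
    have h1 := adj_isLeft h
    simp only [SimpleGraph.Walk.length_cons, Nat.even_add_one, ← ih, h1]
    cases hb : b.isLeft <;> cases hc : c.isLeft <;> simp_all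

lemma cycle_even {u : Finset X ⊕ Finset X} (p : (overlapGraph π π').Walk u u) :
    Even p.length := (walk_parity p).mp rfl

end parity


section algebra
variable {X : Type*} [Fintype X]

noncomputable def dl {X : Type*} (a b : X) : ℚ := if a = b then 1 else 0

noncomputable def ed {X : Type*} (p q a b : X) : ℚ := dl p a * dl q b - dl q a * dl p b

/-- Elementary alternating triangle (determinant form). -/
noncomputable def t3 {X : Type*} (p q r a b c : X) : ℚ :=
  dl p a * dl q b * dl r c - dl p a * dl r b * dl q c
  + dl q a * dl r b * dl p c - dl q a * dl p b * dl r c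
  + dl r a * dl p b * dl q c - dl r a * dl q b * dl p c

lemma dl_comm {X : Type*} (a b : X) : dl a b = dl b a := by
  simp [dl, eq_comm]

lemma sum_dl (r : X) : ∑ c, dl r c = 1 := by
  simp [dl, Finset.sum_ite_eq]

lemma sum_dl_mul (c : X → ℚ) (x : X) : ∑ p, dl p x * c p = c x := by
  simp [dl, ite_mul, Finset.sum_ite_eq']

lemma t3_swap12 {X : Type*} (p q r a b c : X) : t3 p q r b a c = - t3 p q r a b c := by
  simp only [t3]; ring

lemma t3_swap23 {X : Type*} (p q r a b c : X) : t3 p q r a c b = - t3 p q r a b c := by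
  simp only [t3]; ring

lemma sum_t3 (p q r a b : X) :
    ∑ c, t3 p q r a b c = ed p q a b + ed q r a b + ed r p a b := by
  have h : ∀ x : X, ∑ c, dl x c = 1 := sum_dl
  have : ∀ c, t3 p q r a b c =
      (dl p a * dl q b - dl q a * dl p b) * dl r c
      + (dl q a * dl r b - dl r a * dl q b) * dl p c
      + (dl r a * dl p b - dl p a * dl r b) * dl q c := by
    intro c; simp only [t3]; ring
  rw [Finset.sum_congr rfl (fun c _ => this c)]
  rw [Finset.sum_add_distrib, Finset.sum_add_distrib, ← Finset.mul_sum, ← Finset.mul_sum,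
    ← Finset.mul_sum, h, h, h]
  simp only [ed]
  ring

lemma t3_ne_zero {X : Type*} {p q r a b c : X} (h : t3 p q r a b c ≠ 0) :
    (a = p ∨ a = q ∨ a = r) ∧ (b = p ∨ b = q ∨ b = r) ∧ (c = p ∨ c = q ∨ c = r) := by
  by_contra hc
  push_neg at hc
  apply h
  by_cases h1 : a = p ∨ a = q ∨ a = r
  · by_cases h2 : b = p ∨ b = q ∨ b = r
    · have h3 := hc h1 h2
      simp [t3, dl, Ne.symm h3.1, Ne.symm h3.2.1, Ne.symm h3.2.2]
    · push_neg at h2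
      simp [t3, dl, Ne.symm h2.1, Ne.symm h2.2.1, Ne.symm h2.2.2]
  · push_neg at h1
    simp [t3, dl, Ne.symm h1.1, Ne.symm h1.2.1, Ne.symm h1.2.2]

end algebra

section retract
variable {X : Type*} [Fintype X]

noncomputable def push (f : X → X → ℚ) (v : X → X) : X → X → ℚ :=
  fun a b => ∑ p, ∑ q, dl (v p) a * dl (v q) b * f p q

noncomputable def prism (f : X → X → ℚ) (v : X → X) : X → X → X → ℚ :=
  fun x y z => (-(1:ℚ)/2) * ∑ p, ∑ q,
    f p q * (t3 p (v p) (v q) x y z - t3 p q (v q) x y z)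

variable {f : X → X → ℚ} {v : X → X}

lemma col_zero (hf : ∀ x y, f x y = - f y x) (hc : ∀ x, ∑ y, f x y = 0) (q : X) :
    ∑ p, f p q = 0 := by
  have : ∀ p, f p q = - f q p := fun p => hf p q
  simp only [this]
  simp [hc q]

lemma push_antisym (hf : ∀ x y, f x y = - f y x) (a b : X) :
    push f v a b = - push f v b a := by
  have h1 : push f v b a = ∑ p, ∑ q, dl (v p) a * dl (v q) b * f q p := by
    rw [push, Finset.sum_comm]
    apply Finset.sum_congr rfl; intro p _
    apply Finset.sum_congr rfl; intro q _
    ring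
  have h2 : ∀ p q, dl (v p) a * dl (v q) b * f p q
      = - (dl (v p) a * dl (v q) b * f q p) := by
    intro p q; rw [hf p q]; ring
  rw [h1, push]
  simp only [h2, Finset.sum_neg_distrib]

lemma push_cycle (hc : ∀ x, ∑ y, f x y = 0) (a : X) : ∑ b, push f v a b = 0 := by
  simp only [push]
  rw [Finset.sum_comm]
  apply Finset.sum_eq_zero; intro p _
  rw [Finset.sum_comm]
  have h1 : ∀ q, ∑ b, dl (v p) a * dl (v q) b * f p q = dl (v p) a * f p q := by
    intro q
    have h2 : ∀ b, dl (v p) a * dl (v q) b * f p q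
        = (dl (v p) a * f p q) * dl (v q) b := fun b => by ring
    simp only [h2, ← Finset.mul_sum, sum_dl, mul_one]
  simp only [h1, ← Finset.mul_sum, hc p, mul_zero]

lemma push_support {a b : X} (h : push f v a b ≠ 0) :
    ∃ p q, f p q ≠ 0 ∧ v p = a ∧ v q = b := by
  obtain ⟨p, -, hp⟩ := Finset.exists_ne_zero_of_sum_ne_zero h
  obtain ⟨q, -, hq⟩ := Finset.exists_ne_zero_of_sum_ne_zero hp
  refine ⟨p, q, ?_, ?_, ?_⟩
  · intro h0; rw [h0] at hq; simp at hq
  · by_contra h0; rw [show dl (v p) a = 0 from if_neg h0] at hq; simp at hq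
  · by_contra h0; rw [show dl (v q) b = 0 from if_neg h0] at hq; simp at hq

end retract

section prismlemmas
variable {X : Type*} [Fintype X] {f : X → X → ℚ} {v : X → X}

lemma prism_alt1 (x y z : X) : prism f v y x z = - prism f v x y z := by
  simp only [prism]
  have h : ∀ p q, f p q * (t3 p (v p) (v q) y x z - t3 p q (v q) y x z)
      = - (f p q * (t3 p (v p) (v q) x y z - t3 p q (v q) x y z)) := by
    intro p q; simp only [t3]; ring
  simp only [h, Finset.sum_neg_distrib]
  ring

lemma prism_alt2 (x y z : X) : prism f v x z y = - prism f v x y z := by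
  simp only [prism]
  have h : ∀ p q, f p q * (t3 p (v p) (v q) x z y - t3 p q (v q) x z y)
      = - (f p q * (t3 p (v p) (v q) x y z - t3 p q (v q) x y z)) := by
    intro p q; simp only [t3]; ring
  simp only [h, Finset.sum_neg_distrib]
  ring

lemma pick2 (f : X → X → ℚ) (x y : X) : ∑ p, ∑ q, dl p x * dl q y * f p q = f x y := by
  have h1 : ∀ p, ∑ q, dl p x * dl q y * f p q = dl p x * f p y := by
    intro p
    have h2 : ∀ q, dl p x * dl q y * f p q = dl q y * (dl p x * f p q) := fun q => by ring
    simp only [h2]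
    exact sum_dl_mul (fun q => dl p x * f p q) y
  simp only [h1]
  exact sum_dl_mul (fun p => f p y) x

lemma prism_boundary (hf : ∀ x y, f x y = - f y x) (hc : ∀ x, ∑ y, f x y = 0) (x y : X) :
    ∑ z, prism f v x y z = f x y - push f v x y := by
  simp only [prism, ← Finset.mul_sum]
  rw [Finset.sum_comm]
  have h0 : ∀ p, ∑ z, ∑ q, f p q * (t3 p (v p) (v q) x y z - t3 p q (v q) x y z)
      = ∑ q, f p q * (ed p (v p) x y + ed (v p) (v q) x y - ed p q x y - ed q (v q) x y) := by
    intro p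
    rw [Finset.sum_comm]
    apply Finset.sum_congr rfl; intro q _
    rw [← Finset.mul_sum, Finset.sum_sub_distrib, sum_t3, sum_t3]
    ring
  simp only [h0]
  -- split the inner sum into four pieces
  have hsplit : ∀ p, ∑ q, f p q * (ed p (v p) x y + ed (v p) (v q) x y - ed p q x y - ed q (v q) x y)
      = (∑ q, f p q * ed p (v p) x y) + (∑ q, f p q * ed (v p) (v q) x y)
        - (∑ q, f p q * ed p q x y) - (∑ q, f p q * ed q (v q) x y) := by
    intro p
    rw [← Finset.sum_add_distrib, ← Finset.sum_sub_distrib, ← Finset.sum_sub_distrib]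
    apply Finset.sum_congr rfl; intro q _; ring
  simp only [hsplit]
  rw [Finset.sum_sub_distrib, Finset.sum_sub_distrib, Finset.sum_add_distrib]
  have S1 : ∑ p, ∑ q, f p q * ed p (v p) x y = 0 := by
    apply Finset.sum_eq_zero; intro p _
    rw [← Finset.sum_mul, hc p, zero_mul]
  have S2 : ∑ p, ∑ q, f p q * ed (v p) (v q) x y = 2 * push f v x y := by
    have h1 : ∀ p q, f p q * ed (v p) (v q) x y
        = dl (v p) x * dl (v q) y * f p q - dl (v p) y * dl (v q) x * f p q := by
      intro p q; simp only [ed]; ring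
    simp only [h1, Finset.sum_sub_distrib]
    have h2 : ∑ p, ∑ q, dl (v p) y * dl (v q) x * f p q = push f v y x := rfl
    have h3 : ∑ p, ∑ q, dl (v p) x * dl (v q) y * f p q = push f v x y := rfl
    rw [h2, h3, push_antisym hf y x]
    ring
  have S3 : ∑ p, ∑ q, f p q * ed p q x y = 2 * f x y := by
    have h1 : ∀ p q, f p q * ed p q x y
        = dl p x * dl q y * f p q - dl p y * dl q x * f p q := by
      intro p q; simp only [ed]; ring
    simp only [h1, Finset.sum_sub_distrib]
    rw [pick2, pick2 (f := f) y x]  -- second: ∑p∑q dl p y * dl q x * f p q = f y x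
    rw [hf x y]; ring
  have S4 : ∑ p, ∑ q, f p q * ed q (v q) x y = 0 := by
    rw [Finset.sum_comm]
    apply Finset.sum_eq_zero; intro q _
    rw [← Finset.sum_mul, col_zero hf hc q, zero_mul]
  rw [S1, S2, S3, S4]
  ring

set_option maxHeartbeats 1000000 in
lemma prism_support {x y z : X} (h : prism f v x y z ≠ 0) :
    ∃ p q, f p q ≠ 0
      ∧ (x = p ∨ x = q ∨ x = v p ∨ x = v q)
      ∧ (y = p ∨ y = q ∨ y = v p ∨ y = v q)
      ∧ (z = p ∨ z = q ∨ z = v p ∨ z = v q) := by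
  have h1 : (∑ p, ∑ q, f p q * (t3 p (v p) (v q) x y z - t3 p q (v q) x y z)) ≠ 0 := by
    intro h0; apply h; simp only [prism, h0, mul_zero]
  obtain ⟨p, -, hp⟩ := Finset.exists_ne_zero_of_sum_ne_zero h1
  obtain ⟨q, -, hq⟩ := Finset.exists_ne_zero_of_sum_ne_zero hp
  have hfpq : f p q ≠ 0 := by
    intro h0; rw [h0] at hq; simp at hq
  have ht : t3 p (v p) (v q) x y z ≠ 0 ∨ t3 p q (v q) x y z ≠ 0 := by
    by_contra h0
    push_neg at h0
    rw [h0.1, h0.2] at hq; simp at hq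
  refine ⟨p, q, hfpq, ?_⟩
  rcases ht with ht | ht <;> obtain ⟨ha, hb, hct⟩ := t3_ne_zero ht <;> tauto

end prismlemmas


section leaf
variable {V : Type*} [Fintype V] [DecidableEq V] {G : SimpleGraph V}

lemma edge_end {v : V} :
    ∀ {u : V} (p : G.Walk u v), p.IsPath → ∀ {w w' : V},
      s(w, v) ∈ p.edges → s(w', v) ∈ p.edges → w = w' := by
  intro u p
  induction p with
  | nil => simp
  | @cons u x v hadj q ih =>
    intro hp w w' h h'
    have hq : q.IsPath := hp.of_cons
    have hu : u ∉ q.support := ((SimpleGraph.Walk.cons_isPath_iff _ _).mp hp).2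
    have huv : u ≠ v := fun he => hu (he ▸ q.end_mem_support)
    rw [SimpleGraph.Walk.edges_cons, List.mem_cons] at h h'
    have key : ∀ {a : V}, s(a, v) = s(u, x) → a = u ∧ v = x := by
      intro a ha
      rw [Sym2.eq_iff] at ha
      rcases ha with ⟨h1, h2⟩ | ⟨h1, h2⟩
      · exact ⟨h1, h2⟩
      · exact absurd h2.symm huv
    rcases h with h | h <;> rcases h' with h' | h'
    · rw [(key h).1, (key h').1]
    · obtain ⟨-, rfl⟩ := key h
      rw [SimpleGraph.Walk.isPath_iff_eq_nil.mp hq] at h'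
      simp at h'
    · obtain ⟨-, rfl⟩ := key h'
      rw [SimpleGraph.Walk.isPath_iff_eq_nil.mp hq] at h
      simp at h
    · exact ih hq h h'

lemma exists_leaf (hG : ∀ (u : V) (p : G.Walk u u), ¬ p.IsCycle)
    (S : Finset V) (hS : S.Nonempty) :
    ∃ a ∈ S, (S.filter (fun b => G.Adj a b)).card ≤ 1 := by
  by_contra hcon
  push_neg at hcon
  -- every vertex of S has at least two neighbours in S; build arbitrarily long paths
  have step : ∀ n, ∃ (u w : V) (p : G.Walk u w), p.IsPath ∧ (∀ x ∈ p.support, x ∈ S)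
      ∧ p.length = n := by
    intro n
    induction n with
    | zero =>
      obtain ⟨a, ha⟩ := hS
      exact ⟨a, a, SimpleGraph.Walk.nil, by simp, by simpa using ha, rfl⟩
    | succ n ihn =>
      obtain ⟨u, w, p, hp, hsup, hlen⟩ := ihn
      have hw : w ∈ S := hsup w p.end_mem_support
      have h2 := hcon w hw
      -- two distinct neighbours of w in S
      obtain ⟨b, hb, c, hc, hbc⟩ := Finset.one_lt_card.mp h2
      rw [Finset.mem_filter] at hb hc
      -- extend the path if the new vertex is fresh
      have extend : ∀ {z : V}, G.Adj w z → z ∈ S → z ∉ p.support →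
          ∃ (u' w' : V) (p' : G.Walk u' w'), p'.IsPath ∧ (∀ x ∈ p'.support, x ∈ S)
            ∧ p'.length = n + 1 := by
        intro z hz hzS hzp
        refine ⟨z, u, SimpleGraph.Walk.cons hz.symm p.reverse, ?_, ?_, ?_⟩
        · rw [SimpleGraph.Walk.cons_isPath_iff]
          exact ⟨hp.reverse, by simpa using hzp⟩
        · intro x hx
          rw [SimpleGraph.Walk.support_cons, List.mem_cons] at hx
          rcases hx with rfl | hx
          · exact hzS
          · exact hsup x (by simpa using hx)
        · simp [hlen]
      by_cases hbp : b ∉ p.support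
      · exact extend hb.2 hb.1 hbp
      by_cases hcp : c ∉ p.support
      · exact extend hc.2 hc.1 hcp
      push_neg at hbp hcp
      -- both neighbours lie on the path: we can close a cycle, contradiction
      exfalso
      have hedge : s(w, b) ∉ p.edges ∨ s(w, c) ∉ p.edges := by
        by_contra h0
        push_neg at h0
        exact hbc (edge_end p hp (Sym2.eq_swap ▸ h0.1) (Sym2.eq_swap ▸ h0.2))
      -- pick the neighbour whose closing edge is not on the path
      obtain ⟨z, hzadj, hzp, hze⟩ : ∃ z, G.Adj w z ∧ z ∈ p.support ∧ s(w, z) ∉ p.edges := by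
        rcases hedge with h0 | h0
        · exact ⟨b, hb.2, hbp, h0⟩
        · exact ⟨c, hc.2, hcp, h0⟩
      set q := p.dropUntil z hzp with hqdef
      have hqpath : q.IsPath := hp.dropUntil hzp
      have hqe : s(w, z) ∉ q.edges := fun h0 => hze (p.edges_dropUntil_subset hzp h0)
      have : (SimpleGraph.Walk.cons hzadj q).IsCycle :=
        (SimpleGraph.Walk.cons_isCycle_iff q hzadj).mpr ⟨hqpath, hqe⟩
      exact hG w _ this
  obtain ⟨u, w, p, hp, hsup, hlen⟩ := step S.card
  have h1 : p.support.length = S.card + 1 := by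
    rw [SimpleGraph.Walk.length_support, hlen]
  have h2 : p.support.toFinset ⊆ S := fun x hx => hsup x (List.mem_toFinset.mp hx)
  have h3 : p.support.toFinset.card = S.card + 1 := by
    rw [List.toFinset_card_of_nodup hp.support_nodup, h1]
  have := Finset.card_le_card h2
  omega
end leaf

lemma nonempty_inter' {Y : Type*} {D : DecidableEq Y} {A B : Finset Y} {x : Y}
    (h1 : x ∈ A) (h2 : x ∈ B) :
    (@Inter.inter _ (@Finset.instInter Y D) A B).Nonempty := by
  letI := D
  exact ⟨x, Finset.mem_inter.mpr ⟨h1, h2⟩⟩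

lemma exists_mem_inter' {Y : Type*} {D : DecidableEq Y} {A B : Finset Y}
    (h : (@Inter.inter _ (@Finset.instInter Y D) A B).Nonempty) :
    ∃ x, x ∈ A ∧ x ∈ B := by
  letI := D
  obtain ⟨x, hx⟩ := h
  exact ⟨x, Finset.mem_inter.mp hx⟩

section acyclic
variable {X : Type*} [DecidableEq X] [Fintype X] (π π' : Partn X)

def Uset {X : Type*} : Finset X ⊕ Finset X → Finset X := Sum.elim id id

def validV {X : Type*} (π π' : Partn X) : Finset X ⊕ Finset X → Prop
  | Sum.inl C => C ∈ π.parts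
  | Sum.inr C => C ∈ π'.parts

variable {π π'}

lemma adj_of_overlap {a b : Finset X ⊕ Finset X} (ha : validV π π' a) (hb : validV π π' b)
    (hne : a ≠ b) (hov : (Uset a ∩ Uset b).Nonempty) : (overlapGraph π π').Adj a b := by
  rw [overlapGraph, SimpleGraph.fromRel_adj]
  refine ⟨hne, ?_⟩
  obtain ⟨x, hx⟩ := hov
  rw [Finset.mem_inter] at hx
  rcases a with A | A <;> rcases b with B | B
  · exact absurd (congrArg Sum.inl (π.eq_of_mem_s15 ha hb hx.1 hx.2)) hne
  · exact Or.inl ⟨ha, hb, nonempty_inter' hx.1 hx.2⟩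
  · exact Or.inr ⟨hb, ha, nonempty_inter' hx.2 hx.1⟩
  · exact absurd (congrArg Sum.inr (π'.eq_of_mem_s15 ha hb hx.1 hx.2)) hne

lemma overlap_of_adj {a b : Finset X ⊕ Finset X} (h : (overlapGraph π π').Adj a b) :
    (Uset a ∩ Uset b).Nonempty := by
  rw [overlapGraph, SimpleGraph.fromRel_adj] at h
  rcases h with ⟨-, h | h⟩ <;> rcases a with A | A <;> rcases b with B | B <;>
      simp only [overlapRel] at h
  all_goals try exact h.elim
  · obtain ⟨x, hx1, hx2⟩ := exists_mem_inter' h.2.2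
    exact ⟨x, Finset.mem_inter.mpr ⟨hx1, hx2⟩⟩
  · obtain ⟨x, hx1, hx2⟩ := exists_mem_inter' h.2.2
    exact ⟨x, Finset.mem_inter.mpr ⟨hx2, hx1⟩⟩

lemma valid_of_adj_left {a b : Finset X ⊕ Finset X} (h : (overlapGraph π π').Adj a b) :
    validV π π' a ∧ validV π π' b := by
  rw [overlapGraph, SimpleGraph.fromRel_adj] at h
  rcases h with ⟨-, h | h⟩ <;> rcases a with A | A <;> rcases b with B | B <;>
      simp only [overlapRel] at h
  all_goals first
    | exact h.elim
    | exact ⟨h.1, h.2.1⟩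
    | exact ⟨h.2.1, h.1⟩

lemma acyclic_H1 (hG : ∀ (u : Finset X ⊕ Finset X) (p : (overlapGraph π π').Walk u u),
      ¬ p.IsCycle) :
    ∀ (n : ℕ) (W : Finset (Finset X ⊕ Finset X)), W.card = n →
    (∀ v ∈ W, validV π π' v) →
    ∀ f : X → X → ℚ,
      (∀ x y, f x y = - f y x) →
      (∀ x y, f x y ≠ 0 → ∃ v ∈ W, x ∈ Uset v ∧ y ∈ Uset v) →
      (∀ x, ∑ y, f x y = 0) →
      ∃ g : X → X → X → ℚ,
        (∀ x y z, g x y z = - g y x z) ∧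
        (∀ x y z, g x y z = - g x z y) ∧
        (∀ x y z, g x y z ≠ 0 → ∃ v ∈ W, x ∈ Uset v ∧ y ∈ Uset v ∧ z ∈ Uset v) ∧
        (∀ x y, f x y = ∑ z, g x y z) := by
  intro n
  induction n with
  | zero =>
    intro W hW hval f hf hsupp hc
    rw [Finset.card_eq_zero] at hW
    subst hW
    refine ⟨fun _ _ _ => 0, by simp, by simp, by simp, fun x y => ?_⟩
    by_contra h0
    have hfxy : f x y ≠ 0 := by simpa using h0
    obtain ⟨v, hv, -⟩ := hsupp x y hfxy
    simp at hv
  | succ n ih =>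
    intro W hW hval f hf hsupp hc
    have hWne : W.Nonempty := by
      rw [← Finset.card_pos, hW]; omega
    obtain ⟨a, haW, hleaf⟩ := exists_leaf hG W hWne
    have hva : validV π π' a := hval a haW
    have haU : (Uset a).Nonempty := by
      rcases a with A | A
      · exact π.nonempty A hva
      · exact π'.nonempty A hva
    -- choose the basepoint pt and the retracted set T
    obtain ⟨pt, T, hptU, hptT, hTU, honly, hcov⟩ :
        ∃ (pt : X) (T : Finset X), pt ∈ Uset a ∧ pt ∉ T ∧ (∀ x ∈ T, x ∈ Uset a) ∧
          (∀ x ∈ T, ∀ w ∈ W, x ∈ Uset w → w = a) ∧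
          ((∀ x ∈ Uset a, x ∉ T → x = pt) ∨
            (∃ b ∈ W, b ≠ a ∧ pt ∈ Uset b ∧ ∀ x ∈ Uset a, x ∉ T → x ∈ Uset b)) := by
      by_cases hN : (W.filter (fun b => (overlapGraph π π').Adj a b)).Nonempty
      · obtain ⟨b, hbN⟩ := hN
        rw [Finset.mem_filter] at hbN
        obtain ⟨hbW, hab⟩ := hbN
        obtain ⟨pt, hpt⟩ := overlap_of_adj hab
        rw [Finset.mem_inter] at hpt
        refine ⟨pt, Uset a \ Uset b, hpt.1, by simp [hpt.2], fun x hx => (Finset.mem_sdiff.mp hx).1,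
          ?_, Or.inr ⟨b, hbW, hab.ne', hpt.2,
            fun x hx hx2 => by
              by_contra h0
              exact hx2 (Finset.mem_sdiff.mpr ⟨hx, h0⟩)⟩⟩
        · intro x hx w hwW hxw
          by_contra hwa
          have hadj : (overlapGraph π π').Adj a w := by
            apply adj_of_overlap hva (hval w hwW) (fun h => hwa h.symm)
            exact ⟨x, Finset.mem_inter.mpr ⟨(Finset.mem_sdiff.mp hx).1, hxw⟩⟩
          have hwN : w ∈ W.filter (fun b => (overlapGraph π π').Adj a b) :=
            Finset.mem_filter.mpr ⟨hwW, hadj⟩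
          have hbN' : b ∈ W.filter (fun b => (overlapGraph π π').Adj a b) :=
            Finset.mem_filter.mpr ⟨hbW, hab⟩
          have : w = b := Finset.card_le_one.mp hleaf _ hwN _ hbN'
          subst this
          exact (Finset.mem_sdiff.mp hx).2 hxw
      · obtain ⟨pt, hpt⟩ := haU
        refine ⟨pt, (Uset a).erase pt, hpt, Finset.notMem_erase pt _,
          fun x hx => Finset.mem_of_mem_erase hx, ?_,
          Or.inl (fun x hx hx2 => by
            by_contra h0
            exact hx2 (Finset.mem_erase.mpr ⟨h0, hx⟩))⟩
        intro x hx w hwW hxw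
        by_contra hwa
        have hadj : (overlapGraph π π').Adj a w := by
          apply adj_of_overlap hva (hval w hwW) (fun h => hwa h.symm)
          exact ⟨x, Finset.mem_inter.mpr ⟨Finset.mem_of_mem_erase hx, hxw⟩⟩
        exact hN ⟨w, Finset.mem_filter.mpr ⟨hwW, hadj⟩⟩
    -- the retraction
    set v : X → X := fun x => if x ∈ T then pt else x with hvdef
    have hvT : ∀ x ∈ T, v x = pt := fun x hx => by simp [hvdef, hx]
    have hvnT : ∀ x, x ∉ T → v x = x := fun x hx => by simp [hvdef, hx]
    have hf'anti := push_antisym (v := v) hf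
    have hf'cyc := push_cycle (v := v) (f := f) hc
    -- support of the pushed cycle avoids `a`
    have hsupp' : ∀ x y, push f v x y ≠ 0 → ∃ w ∈ W.erase a, x ∈ Uset w ∧ y ∈ Uset w := by
      intro x y hxy
      have hxyne : x ≠ y := by
        intro h0
        subst h0
        have := hf'anti x x
        apply hxy
        linarith
      obtain ⟨p, q, hpq, hvp, hvq⟩ := push_support hxy
      obtain ⟨c, hcW, hpc, hqc⟩ := hsupp p q hpq
      by_cases hpT : p ∈ T <;> by_cases hqT : q ∈ T
      · exact absurd (by rw [← hvp, ← hvq, hvT p hpT, hvT q hqT]) hxyne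
      · -- p ∈ T, q ∉ T
        have hca : c = a := honly p hpT c hcW hpc
        subst hca
        have hx' : x = pt := by rw [← hvp, hvT p hpT]
        have hy' : y = q := by rw [← hvq, hvnT q hqT]
        rcases hcov with hcov | ⟨b, hbW, hba, hptb, hcov⟩
        · exact absurd (by rw [hx', hy', hcov q hqc hqT]) hxyne
        · exact ⟨b, Finset.mem_erase.mpr ⟨hba, hbW⟩, by rw [hx']; exact hptb,
            by rw [hy']; exact hcov q hqc hqT⟩
      · -- q ∈ T, p ∉ T
        have hca : c = a := honly q hqT c hcW hqc
        subst hca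
        have hy' : y = pt := by rw [← hvq, hvT q hqT]
        have hx' : x = p := by rw [← hvp, hvnT p hpT]
        rcases hcov with hcov | ⟨b, hbW, hba, hptb, hcov⟩
        · exact absurd (by rw [hx', hy', hcov p hpc hpT]) hxyne
        · exact ⟨b, Finset.mem_erase.mpr ⟨hba, hbW⟩, by rw [hx']; exact hcov p hpc hpT,
            by rw [hy']; exact hptb⟩
      · -- neither in T
        have hx' : x = p := by rw [← hvp, hvnT p hpT]
        have hy' : y = q := by rw [← hvq, hvnT q hqT]
        subst hx'; subst hy'
        by_cases hca : c = a
        · subst hca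
          rcases hcov with hcov | ⟨b, hbW, hba, hptb, hcov⟩
          · exact absurd (by rw [hcov x hpc hpT, hcov y hqc hqT]) hxyne
          · exact ⟨b, Finset.mem_erase.mpr ⟨hba, hbW⟩, hcov x hpc hpT, hcov y hqc hqT⟩
        · exact ⟨c, Finset.mem_erase.mpr ⟨hca, hcW⟩, hpc, hqc⟩
    obtain ⟨g', hg1, hg2, hg3, hg4⟩ := ih (W.erase a)
      (by rw [Finset.card_erase_of_mem haW, hW]; omega) (fun w hw => hval w (Finset.mem_of_mem_erase hw))
      (push f v) hf'anti hsupp' hf'cyc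
    refine ⟨fun x y z => g' x y z + prism f v x y z, ?_, ?_, ?_, ?_⟩
    · intro x y z
      show g' x y z + prism f v x y z = -(g' y x z + prism f v y x z)
      rw [hg1, prism_alt1]; ring
    · intro x y z
      show g' x y z + prism f v x y z = -(g' x z y + prism f v x z y)
      rw [hg2, prism_alt2]; ring
    · intro x y z hne0
      have hne : g' x y z + prism f v x y z ≠ 0 := hne0
      by_cases hgz : g' x y z ≠ 0
      · obtain ⟨w, hw, h1, h2, h3⟩ := hg3 x y z hgz
        exact ⟨w, Finset.mem_of_mem_erase hw, h1, h2, h3⟩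
      · push_neg at hgz
        have hpz : prism f v x y z ≠ 0 := by
          intro h0; apply hne; rw [hgz, h0, add_zero]
        obtain ⟨p, q, hpq, hxm, hym, hzm⟩ := prism_support hpz
        obtain ⟨c, hcW, hpc, hqc⟩ := hsupp p q hpq
        by_cases hT : p ∈ T ∨ q ∈ T
        · -- everything lives in Uset a
          have hca : c = a := by
            rcases hT with hT | hT
            · exact honly p hT c hcW hpc
            · exact honly q hT c hcW hqc
          rw [hca] at hpc hqc
          have hall : ∀ w : X, (w = p ∨ w = q ∨ w = v p ∨ w = v q) → w ∈ Uset a := by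
            intro w hw
            have hvp : v p ∈ Uset a := by
              by_cases h0 : p ∈ T
              · rw [hvT p h0]; exact hptU
              · rw [hvnT p h0]; exact hpc
            have hvq : v q ∈ Uset a := by
              by_cases h0 : q ∈ T
              · rw [hvT q h0]; exact hptU
              · rw [hvnT q h0]; exact hqc
            rcases hw with rfl | rfl | rfl | rfl
            · exact hpc
            · exact hqc
            · exact hvp
            · exact hvq
          exact ⟨a, haW, hall x hxm, hall y hym, hall z hzm⟩
        · push_neg at hT
          have hall : ∀ w : X, (w = p ∨ w = q ∨ w = v p ∨ w = v q) → w ∈ Uset c := by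
            intro w hw
            rcases hw with rfl | rfl | rfl | rfl
            · exact hpc
            · exact hqc
            · rw [hvnT p hT.1]; exact hpc
            · rw [hvnT q hT.2]; exact hqc
          exact ⟨c, hcW, hall x hxm, hall y hym, hall z hzm⟩
    · intro x y
      show f x y = ∑ z, (g' x y z + prism f v x y z)
      rw [Finset.sum_add_distrib, ← hg4, prism_boundary hf hc]
      ring

end acyclic

section cochain
variable {X : Type*} [DecidableEq X] [Fintype X] {π π' : Partn X}

noncomputable def eecl (π π' : Partn X) (x : X) : Finset X × Finset X := (π.cl x, π'.cl x)

noncomputable def omx (π π' : Partn X) (E0 : Finset X × Finset X) (x : X) : ℚ :=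
  if eecl π π' x = E0 then 1 else 0

noncomputable def wgt (π π' : Partn X) (E0 : Finset X × Finset X) (x y : X) : ℚ :=
  if π.cl x = π.cl y then (omx π π' E0 y - omx π π' E0 x) / 2
  else if π'.cl x = π'.cl y then (omx π π' E0 x - omx π π' E0 y) / 2
  else 0

lemma wgt_P {E0} {x y : X} (h : π.cl x = π.cl y) :
    wgt π π' E0 x y = (omx π π' E0 y - omx π π' E0 x) / 2 := by
  simp only [wgt]; rw [if_pos h]

lemma wgt_P' {E0} {x y : X} (h : π'.cl x = π'.cl y) :
    wgt π π' E0 x y = (omx π π' E0 x - omx π π' E0 y) / 2 := by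
  simp only [wgt]
  by_cases h0 : π.cl x = π.cl y
  · rw [if_pos h0]
    have he : eecl π π' x = eecl π π' y := by rw [eecl, eecl, h0, h]
    simp only [omx, he]
    try ring
  · rw [if_neg h0, if_pos h]

lemma wgt_cocycle {E0} {C : Finset X} (hC : C ∈ π.parts ∨ C ∈ π'.parts) {x y z : X}
    (hx : x ∈ C) (hy : y ∈ C) (hz : z ∈ C) :
    wgt π π' E0 x y + wgt π π' E0 y z + wgt π π' E0 z x = 0 := by
  rcases hC with hC | hC
  · have h1 : π.cl x = π.cl y := by rw [← π.cl_eq hC hx, ← π.cl_eq hC hy]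
    have h2 : π.cl y = π.cl z := by rw [← π.cl_eq hC hy, ← π.cl_eq hC hz]
    have h3 : π.cl z = π.cl x := by rw [← π.cl_eq hC hz, ← π.cl_eq hC hx]
    rw [wgt_P h1, wgt_P h2, wgt_P h3]; ring
  · have h1 : π'.cl x = π'.cl y := by rw [← π'.cl_eq hC hx, ← π'.cl_eq hC hy]
    have h2 : π'.cl y = π'.cl z := by rw [← π'.cl_eq hC hy, ← π'.cl_eq hC hz]
    have h3 : π'.cl z = π'.cl x := by rw [← π'.cl_eq hC hz, ← π'.cl_eq hC hx]
    rw [wgt_P' h1, wgt_P' h2, wgt_P' h3]; ring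

lemma triple_rot {α : Type*} [Fintype α] (F : α → α → α → ℚ) :
    ∑ x, ∑ y, ∑ z, F x y z = ∑ x, ∑ y, ∑ z, F z x y := by
  rw [Finset.sum_comm]
  apply Finset.sum_congr rfl
  intro b _
  rw [Finset.sum_comm]

lemma pairing_zero (E0 : Finset X × Finset X) (g : X → X → X → ℚ)
    (hg1 : ∀ x y z, g x y z = - g y x z) (hg2 : ∀ x y z, g x y z = - g x z y)
    (hsupp : ∀ x y z, g x y z ≠ 0 → ∃ C, (C ∈ π.parts ∨ C ∈ π'.parts) ∧
      x ∈ C ∧ y ∈ C ∧ z ∈ C) :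
    ∑ x, ∑ y, wgt π π' E0 x y * (∑ z, g x y z) = 0 := by
  have gcyc : ∀ x y z, g z x y = g x y z := by
    intro x y z
    rw [hg1 z x y, hg2 x z y, hg1 x y z]
    ring
  have hLHS : ∑ x, ∑ y, wgt π π' E0 x y * (∑ z, g x y z)
      = ∑ x, ∑ y, ∑ z, wgt π π' E0 x y * g x y z := by
    simp only [Finset.mul_sum]
  have e1 : ∑ x, ∑ y, ∑ z, wgt π π' E0 y z * g x y z
      = ∑ x, ∑ y, ∑ z, wgt π π' E0 x y * g x y z := by
    rw [triple_rot (fun x y z => wgt π π' E0 y z * g x y z)]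
    simp only [gcyc]
  have e2 : ∑ x, ∑ y, ∑ z, wgt π π' E0 z x * g x y z
      = ∑ x, ∑ y, ∑ z, wgt π π' E0 y z * g x y z := by
    rw [triple_rot (fun x y z => wgt π π' E0 z x * g x y z)]
    simp only [gcyc]
  have e4 : ∑ x, ∑ y, ∑ z,
      (wgt π π' E0 x y + wgt π π' E0 y z + wgt π π' E0 z x) * g x y z = 0 := by
    apply Finset.sum_eq_zero; intro x _
    apply Finset.sum_eq_zero; intro y _
    apply Finset.sum_eq_zero; intro z _
    by_cases hg : g x y z = 0
    · rw [hg, mul_zero]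
    · obtain ⟨C, hC, hx, hy, hz⟩ := hsupp x y z hg
      rw [wgt_cocycle hC hx hy hz, zero_mul]
  have e3 : ∑ x, ∑ y, ∑ z,
      (wgt π π' E0 x y + wgt π π' E0 y z + wgt π π' E0 z x) * g x y z
      = (∑ x, ∑ y, ∑ z, wgt π π' E0 x y * g x y z)
        + (∑ x, ∑ y, ∑ z, wgt π π' E0 y z * g x y z)
        + (∑ x, ∑ y, ∑ z, wgt π π' E0 z x * g x y z) := by
    have h : ∀ x y z, (wgt π π' E0 x y + wgt π π' E0 y z + wgt π π' E0 z x) * g x y z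
        = wgt π π' E0 x y * g x y z + wgt π π' E0 y z * g x y z
          + wgt π π' E0 z x * g x y z := fun x y z => by ring
    simp only [h, Finset.sum_add_distrib]
  rw [hLHS]
  rw [e1] at e2
  rw [e1, e2] at e3
  rw [e4] at e3
  linarith
end cochain

section forward
variable {X : Type*} [DecidableEq X] [Fintype X] {π π' : Partn X}

lemma edges_get {V' : Type*} {G : SimpleGraph V'} :
    ∀ {a b : V'} (p : G.Walk a b) (i : ℕ) (hi : i < p.edges.length),
      p.edges.get ⟨i, hi⟩ = s(p.getVert i, p.getVert (i + 1)) := by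
  intro a b p
  induction p with
  | nil => intro i hi; simp at hi
  | @cons a c b h q ih =>
    intro i hi
    cases i with
    | zero =>
      simp [SimpleGraph.Walk.getVert_cons_succ]
    | succ i =>
      simp only [SimpleGraph.Walk.edges_cons, List.get_cons_succ,
        SimpleGraph.Walk.getVert_cons_succ]
      exact ih i (by simpa using hi)

lemma adj_cases {a b : Finset X ⊕ Finset X} (h : (overlapGraph π π').Adj a b) :
    (∃ A B, A ∈ π.parts ∧ B ∈ π'.parts ∧ a = Sum.inl A ∧ b = Sum.inr B) ∨
    (∃ A B, A ∈ π.parts ∧ B ∈ π'.parts ∧ a = Sum.inr B ∧ b = Sum.inl A) := by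
  rw [overlapGraph, SimpleGraph.fromRel_adj] at h
  rcases h with ⟨-, h | h⟩ <;> rcases a with A | A <;> rcases b with B | B <;>
    simp only [overlapRel] at h
  all_goals try exact h.elim
  · exact Or.inl ⟨A, B, h.1, h.2.1, rfl, rfl⟩
  · exact Or.inr ⟨B, A, h.1, h.2.1, rfl, rfl⟩

lemma cycle_not_H1 {u : Finset X ⊕ Finset X} (p : (overlapGraph π π').Walk u u)
    (hp : p.IsCycle) : ¬ H1Trivial π π' := by
  intro hH1
  set n := p.length with hn
  have hn3 : 3 ≤ n := hp.three_le_length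
  have hnpos : 0 < n := by omega
  have hadjn : ∀ i, i < n → (overlapGraph π π').Adj (p.getVert i) (p.getVert (i + 1)) :=
    fun i hi => p.adj_getVert_succ hi
  have hVn : p.getVert n = p.getVert 0 := by
    rw [hn, SimpleGraph.Walk.getVert_length, SimpleGraph.Walk.getVert_zero]
  -- choose a point in each consecutive overlap
  have haux : ∀ j : ℕ, ∃ z : X, j < n →
      (z ∈ Uset (p.getVert j) ∧ z ∈ Uset (p.getVert (j + 1))) := by
    intro j
    by_cases hj : j < n
    · obtain ⟨z, hz⟩ := overlap_of_adj (hadjn j hj)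
      rw [Finset.mem_inter] at hz
      exact ⟨z, fun _ => hz⟩
    · obtain ⟨z, hz⟩ := overlap_of_adj (hadjn 0 hnpos)
      exact ⟨z, fun h => absurd h hj⟩
  choose ys hys using haux
  set xs : ℕ → X := fun i => ys (i % n) with hxsdef
  have hxsn : xs n = xs 0 := by
    show ys (n % n) = ys (0 % n)
    rw [Nat.mod_self, Nat.zero_mod]
  have hx1 : ∀ i, i < n → xs i ∈ Uset (p.getVert i) := by
    intro i hi
    show ys (i % n) ∈ _
    rw [Nat.mod_eq_of_lt hi]
    exact (hys i hi).1
  have hx2 : ∀ i, i < n → xs i ∈ Uset (p.getVert (i + 1)) := by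
    intro i hi
    show ys (i % n) ∈ _
    rw [Nat.mod_eq_of_lt hi]
    exact (hys i hi).2
  have hx3 : ∀ i, i < n → xs (i + 1) ∈ Uset (p.getVert (i + 1)) := by
    intro i hi
    by_cases h : i + 1 < n
    · exact hx1 (i + 1) h
    · have hin : i + 1 = n := by omega
      rw [hin, hxsn, hVn]
      exact hx1 0 hnpos
  -- the structure of each edge
  have hedge : ∀ i, i < n → π.cl (xs i) ∈ π.parts ∧ π'.cl (xs i) ∈ π'.parts ∧
      s(p.getVert i, p.getVert (i + 1)) = s(Sum.inl (π.cl (xs i)), Sum.inr (π'.cl (xs i))) := by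
    intro i hi
    rcases adj_cases (hadjn i hi) with ⟨A, B, hA, hB, ha, hb⟩ | ⟨A, B, hA, hB, ha, hb⟩
    · have h1 : xs i ∈ A := by have := hx1 i hi; rw [ha] at this; exact this
      have h2 : xs i ∈ B := by have := hx2 i hi; rw [hb] at this; exact this
      have e1 : π.cl (xs i) = A := (π.cl_eq hA h1).symm
      have e2 : π'.cl (xs i) = B := (π'.cl_eq hB h2).symm
      rw [e1, e2, ha, hb]
      exact ⟨hA, hB, rfl⟩
    · have h1 : xs i ∈ B := by have := hx1 i hi; rw [ha] at this; exact this
      have h2 : xs i ∈ A := by have := hx2 i hi; rw [hb] at this; exact this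
      have e1 : π.cl (xs i) = A := (π.cl_eq hA h2).symm
      have e2 : π'.cl (xs i) = B := (π'.cl_eq hB h1).symm
      rw [e1, e2, ha, hb]
      exact ⟨hA, hB, Sym2.eq_swap⟩
  -- distinctness of untagged edges along the cycle
  have hEdist : ∀ i, 0 < i → i < n → eecl π π' (xs i) ≠ eecl π π' (xs 0) := by
    intro i h0 hi heq
    have hinj := List.nodup_iff_injective_get.mp hp.edges_nodup
    have hlen : ∀ j, j < n → j < p.edges.length := by
      intro j hj; rwa [SimpleGraph.Walk.length_edges]
    have e1 := edges_get p i (hlen i hi)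
    have e2 := edges_get p 0 (hlen 0 hnpos)
    have hcl : π.cl (xs i) = π.cl (xs 0) ∧ π'.cl (xs i) = π'.cl (xs 0) := by
      rw [eecl, eecl, Prod.mk.injEq] at heq
      exact heq
    have : p.edges.get ⟨i, hlen i hi⟩ = p.edges.get ⟨0, hlen 0 hnpos⟩ := by
      rw [e1, e2, (hedge i hi).2.2, (hedge 0 hnpos).2.2, hcl.1, hcl.2]
    have := hinj this
    simp only [Fin.mk.injEq] at this
    omega
  -- the 1-cycle supported on the closed loop of points
  set f : X → X → ℚ := fun a b => ∑ i ∈ Finset.range n,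
    (dl (xs i) a * dl (xs (i + 1)) b - dl (xs (i + 1)) a * dl (xs i) b) with hfdef
  have hfanti : ∀ a b, f a b = - f b a := by
    intro a b
    rw [hfdef]
    simp only
    rw [← Finset.sum_neg_distrib]
    apply Finset.sum_congr rfl; intro i _; ring
  have hfcyc : ∀ a, ∑ b, f a b = 0 := by
    intro a
    rw [hfdef]
    simp only
    rw [Finset.sum_comm]
    have h1 : ∀ i, ∑ b, (dl (xs i) a * dl (xs (i + 1)) b - dl (xs (i + 1)) a * dl (xs i) b)
        = dl (xs i) a - dl (xs (i + 1)) a := by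
      intro i
      rw [Finset.sum_sub_distrib, ← Finset.mul_sum, ← Finset.mul_sum, sum_dl, sum_dl]
      ring
    simp only [h1]
    rw [Finset.sum_sub_distrib]
    have h2 : ∑ i ∈ Finset.range n, dl (xs (i + 1)) a = ∑ i ∈ Finset.range n, dl (xs i) a := by
      have h3 := Finset.sum_range_succ' (fun i => dl (xs i) a) n
      have h4 := Finset.sum_range_succ (fun i => dl (xs i) a) n
      rw [h4] at h3
      rw [hxsn] at h3
      linarith
    rw [h2]
    ring
  have hfsupp : ∀ a b, f a b ≠ 0 → ∃ C, (C ∈ π.parts ∨ C ∈ π'.parts) ∧ a ∈ C ∧ b ∈ C := by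
    intro a b hab
    rw [hfdef] at hab
    simp only at hab
    obtain ⟨i, hi, hterm⟩ := Finset.exists_ne_zero_of_sum_ne_zero hab
    rw [Finset.mem_range] at hi
    have hmem : ∀ w : X, (w = xs i ∨ w = xs (i + 1)) → w ∈ Uset (p.getVert (i + 1)) := by
      intro w hw
      rcases hw with rfl | rfl
      · exact hx2 i hi
      · exact hx3 i hi
    have hcases : (a = xs i ∨ a = xs (i + 1)) ∧ (b = xs i ∨ b = xs (i + 1)) := by
      by_cases ha : a = xs i ∨ a = xs (i + 1)
      · by_cases hb : b = xs i ∨ b = xs (i + 1)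
        · exact ⟨ha, hb⟩
        · push_neg at hb
          exfalso; apply hterm
          simp [dl, Ne.symm hb.1, Ne.symm hb.2]
      · push_neg at ha
        exfalso; apply hterm
        simp [dl, Ne.symm ha.1, Ne.symm ha.2]
    have hvalid := (valid_of_adj_left (hadjn i hi)).2
    rcases hV : p.getVert (i + 1) with C | C
    · refine ⟨C, Or.inl ?_, ?_, ?_⟩
      · rw [hV] at hvalid; exact hvalid
      · have := hmem a hcases.1; rw [hV] at this; exact this
      · have := hmem b hcases.2; rw [hV] at this; exact this
    · refine ⟨C, Or.inr ?_, ?_, ?_⟩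
      · rw [hV] at hvalid; exact hvalid
      · have := hmem a hcases.1; rw [hV] at this; exact this
      · have := hmem b hcases.2; rw [hV] at this; exact this
  -- apply H1Trivial to get a filling and derive a contradiction via the pairing
  obtain ⟨g, hg1, hg2, hg3, hg4⟩ := hH1 f hfanti hfsupp hfcyc
  set E0 : Finset X × Finset X := eecl π π' (xs 0) with hE0
  have hzero : ∑ x, ∑ y, wgt π π' E0 x y * f x y = 0 := by
    have h1 : ∀ x y, wgt π π' E0 x y * f x y = wgt π π' E0 x y * (∑ z, g x y z) := by
      intro x y; rw [← hg4]
    simp only [h1]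
    exact pairing_zero E0 g hg1 hg2 hg3
  -- but the pairing computes to ±2
  have hterm : ∀ i, i < n →
      wgt π π' E0 (xs i) (xs (i + 1)) - wgt π π' E0 (xs (i + 1)) (xs i)
      = (if (p.getVert (i + 1)).isLeft then (1:ℚ) else -1)
        * (omx π π' E0 (xs (i + 1)) - omx π π' E0 (xs i)) := by
    intro i hi
    have hm1 := hx2 i hi
    have hm2 := hx3 i hi
    rcases hV : p.getVert (i + 1) with C | C
    · rw [hV] at hm1 hm2
      have hCmem : C ∈ π.parts := by
        have := (valid_of_adj_left (hadjn i hi)).2; rw [hV] at this; exact this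
      have hcl : π.cl (xs i) = π.cl (xs (i + 1)) := by
        rw [← π.cl_eq hCmem hm1, ← π.cl_eq hCmem hm2]
      rw [wgt_P hcl, wgt_P hcl.symm]
      simp only [Sum.isLeft_inl, if_true]
      ring
    · rw [hV] at hm1 hm2
      have hCmem : C ∈ π'.parts := by
        have := (valid_of_adj_left (hadjn i hi)).2; rw [hV] at this; exact this
      have hcl : π'.cl (xs i) = π'.cl (xs (i + 1)) := by
        rw [← π'.cl_eq hCmem hm1, ← π'.cl_eq hCmem hm2]
      rw [wgt_P' hcl, wgt_P' hcl.symm]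
      simp only [Sum.isLeft_inr, Bool.false_eq_true, if_false]
      ring
  have hpair : ∑ x, ∑ y, wgt π π' E0 x y * f x y
      = ∑ i ∈ Finset.range n,
        (wgt π π' E0 (xs i) (xs (i + 1)) - wgt π π' E0 (xs (i + 1)) (xs i)) := by
    have h1 : ∀ x y, wgt π π' E0 x y * f x y = ∑ i ∈ Finset.range n,
        (dl (xs i) x * dl (xs (i + 1)) y * wgt π π' E0 x y
          - dl (xs (i + 1)) x * dl (xs i) y * wgt π π' E0 x y) := by
      intro x y
      rw [hfdef]
      simp only
      rw [Finset.mul_sum]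
      apply Finset.sum_congr rfl; intro i _; ring
    simp only [h1]
    have hsw : ∑ x, ∑ y, ∑ i ∈ Finset.range n,
        (dl (xs i) x * dl (xs (i + 1)) y * wgt π π' E0 x y
          - dl (xs (i + 1)) x * dl (xs i) y * wgt π π' E0 x y)
        = ∑ i ∈ Finset.range n, ∑ x, ∑ y,
        (dl (xs i) x * dl (xs (i + 1)) y * wgt π π' E0 x y
          - dl (xs (i + 1)) x * dl (xs i) y * wgt π π' E0 x y) := by
      calc ∑ x, ∑ y, ∑ i ∈ Finset.range n,
          (dl (xs i) x * dl (xs (i + 1)) y * wgt π π' E0 x y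
            - dl (xs (i + 1)) x * dl (xs i) y * wgt π π' E0 x y)
          = ∑ x, ∑ i ∈ Finset.range n, ∑ y,
          (dl (xs i) x * dl (xs (i + 1)) y * wgt π π' E0 x y
            - dl (xs (i + 1)) x * dl (xs i) y * wgt π π' E0 x y) := by
            apply Finset.sum_congr rfl; intro x _; exact Finset.sum_comm
        _ = _ := Finset.sum_comm
    rw [hsw]
    apply Finset.sum_congr rfl; intro i _
    have ha : ∀ x y : X, (dl (xs i) x * dl (xs (i + 1)) y * wgt π π' E0 x y
        - dl (xs (i + 1)) x * dl (xs i) y * wgt π π' E0 x y)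
        = dl x (xs i) * dl y (xs (i + 1)) * wgt π π' E0 x y
          - dl x (xs (i + 1)) * dl y (xs i) * wgt π π' E0 x y := by
      intro x y
      rw [dl_comm (xs i) x, dl_comm (xs (i + 1)) x, dl_comm (xs i) y, dl_comm (xs (i + 1)) y]
    simp only [ha, Finset.sum_sub_distrib]
    rw [pick2 (wgt π π' E0) (xs i) (xs (i + 1)), pick2 (wgt π π' E0) (xs (i + 1)) (xs i)]
  -- evaluate the pairing
  have hG0 : omx π π' E0 (xs 0) = 1 := by
    rw [hE0, omx, if_pos rfl]
  have hGi : ∀ i, 0 < i → i < n → omx π π' E0 (xs i) = 0 := by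
    intro i h0 hi
    rw [hE0, omx, if_neg (hEdist i h0 hi)]
  have hGn : omx π π' E0 (xs n) = 1 := by rw [hxsn]; exact hG0
  have heval : ∑ i ∈ Finset.range n,
      (wgt π π' E0 (xs i) (xs (i + 1)) - wgt π π' E0 (xs (i + 1)) (xs i))
      = (if (p.getVert ((n - 1) + 1)).isLeft then (1:ℚ) else -1)
        - (if (p.getVert (0 + 1)).isLeft then (1:ℚ) else -1) := by
    rw [Finset.sum_congr rfl (fun i hi => hterm i (Finset.mem_range.mp hi))]
    have hsplit : ∀ i : ℕ, (if (p.getVert (i + 1)).isLeft then (1:ℚ) else -1)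
        * (omx π π' E0 (xs (i + 1)) - omx π π' E0 (xs i))
        = (if (p.getVert (i + 1)).isLeft then (1:ℚ) else -1) * omx π π' E0 (xs (i + 1))
          - (if (p.getVert (i + 1)).isLeft then (1:ℚ) else -1) * omx π π' E0 (xs i) := by
      intro i; ring
    simp only [hsplit]
    rw [Finset.sum_sub_distrib]
    have hfirst : ∑ i ∈ Finset.range n,
        (if (p.getVert (i + 1)).isLeft then (1:ℚ) else -1) * omx π π' E0 (xs (i + 1))
        = (if (p.getVert ((n - 1) + 1)).isLeft then (1:ℚ) else -1) := by
      rw [Finset.sum_eq_single_of_mem (n - 1) (Finset.mem_range.mpr (by omega))]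
      · rw [show (n - 1) + 1 = n by omega, hGn, mul_one]
      · intro b hb hbne
        rw [Finset.mem_range] at hb
        rw [hGi (b + 1) (by omega) (by omega), mul_zero]
    have hsecond : ∑ i ∈ Finset.range n,
        (if (p.getVert (i + 1)).isLeft then (1:ℚ) else -1) * omx π π' E0 (xs i)
        = (if (p.getVert (0 + 1)).isLeft then (1:ℚ) else -1) := by
      rw [Finset.sum_eq_single_of_mem 0 (Finset.mem_range.mpr (by omega))]
      · rw [hG0, mul_one]
      · intro b hb hbne
        rw [Finset.mem_range] at hb
        rw [hGi b (by omega) hb, mul_zero]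
    rw [hfirst, hsecond]
  -- the two signs are opposite
  have hsign : (p.getVert ((n - 1) + 1)).isLeft = !(p.getVert (0 + 1)).isLeft := by
    rw [show (n - 1) + 1 = n by omega, hVn]
    have := adj_isLeft (hadjn 0 hnpos)
    rw [show (0:ℕ) + 1 = 1 by rfl] at this ⊢
    exact this
  rw [hpair, heval] at hzero
  rcases hL : (p.getVert (0 + 1)).isLeft with _ | _ <;> rw [hL] at hsign hzero <;>
    rw [hsign] at hzero <;> norm_num at hzero


end forward

/-- every cycle in the bipartite cluster-overlap graph of two
partitions has even length, and such a cycle exists iff the two-scale MCbiF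
complex has nontrivial first homology (a 1-conflict). -/
theorem overlap_cycles_even_and_cycle_iff_H1_nontrivial
    {X : Type*} [DecidableEq X] [Fintype X] (π π' : Partn X) :
    (∀ (u : Finset X ⊕ Finset X) (p : (overlapGraph π π').Walk u u),
      p.IsCycle → Even p.length) ∧
    ((∃ (u : Finset X ⊕ Finset X) (p : (overlapGraph π π').Walk u u),
        p.IsCycle) ↔ ¬ H1Trivial π π') := by
  refine ⟨fun u p _ => cycle_even p, ?_, ?_⟩
  · rintro ⟨u, p, hp⟩
    exact cycle_not_H1 p hp
  · intro hH1
    by_contra hno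
    push_neg at hno
    apply hH1
    intro f hf hsupp hc
    have hno' : ∀ (u : Finset X ⊕ Finset X) (p : (overlapGraph π π').Walk u u),
        ¬ p.IsCycle := fun u p hp => hno u p hp
    set W : Finset (Finset X ⊕ Finset X) :=
      π.parts.image Sum.inl ∪ π'.parts.image Sum.inr with hW
    have hval : ∀ v ∈ W, validV π π' v := by
      intro v hv
      rw [hW, Finset.mem_union] at hv
      rcases hv with hv | hv <;> rw [Finset.mem_image] at hv <;> obtain ⟨C, hC, rfl⟩ := hv
      · exact hC
      · exact hC
    have hsupp' : ∀ x y, f x y ≠ 0 → ∃ v ∈ W, x ∈ Uset v ∧ y ∈ Uset v := by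
      intro x y hxy
      obtain ⟨C, hC | hC, hx, hy⟩ := hsupp x y hxy
      · exact ⟨Sum.inl C, Finset.mem_union_left _ (Finset.mem_image_of_mem _ hC), hx, hy⟩
      · exact ⟨Sum.inr C, Finset.mem_union_right _ (Finset.mem_image_of_mem _ hC), hx, hy⟩
    obtain ⟨g, hg1, hg2, hg3, hg4⟩ := acyclic_H1 hno' W.card W rfl hval f hf hsupp' hc
    refine ⟨g, hg1, hg2, ?_, hg4⟩
    intro x y z hgz
    obtain ⟨v, hvW, h1, h2, h3⟩ := hg3 x y z hgz
    have hvv := hval v hvW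
    rcases v with C | C
    · exact ⟨C, Or.inl hvv, h1, h2, h3⟩
    · exact ⟨C, Or.inr hvv, h1, h2, h3⟩
end
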